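/- Let s ≥ 1 and let G ≤ Aut(T) be a torsion-free self-similar group such that the quotient G/K_0 is again torsion-free, where K_0 = β_0⁻¹(β_0(G) ∩ N_0) is the zeroth splitting kernel. Then Bas_s(G) is torsion-free. -/

import Mathlib

/-!
Groups of automorphisms of the `m`-regular rooted tree, encoded via portraits:
an automorphism is determined by the family of its labels (local actions)
`label : List (Fin m) → Equiv.Perm (Fin m)`.
-/

namespace Basilica

/-- An automorphism of the `m`-regular rooted tree, given by its portrait. -/
structure TreeAut (m : ℕ) where
  label : List (Fin m) → Equiv.Perm (Fin m)

namespace TreeAut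

variable {m : ℕ}

lemma ext_label {a b : TreeAut m} (h : ∀ u, a.label u = b.label u) : a = b := by
  cases a
  cases b
  simp only [mk.injEq]
  exact funext h

/-- The section of an automorphism at a vertex. -/
def sec (a : TreeAut m) (v : List (Fin m)) : TreeAut m := ⟨fun u => a.label (v ++ u)⟩

@[simp] lemma sec_label (a : TreeAut m) (v u : List (Fin m)) :
    (a.sec v).label u = a.label (v ++ u) := rfl

@[simp] lemma sec_nil (a : TreeAut m) : a.sec [] = a := rfl

lemma sec_sec (a : TreeAut m) (v w : List (Fin m)) : (a.sec v).sec w = a.sec (v ++ w) :=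
  ext_label fun u => by simp [List.append_assoc]

/-- The action of a tree automorphism on the vertices (finite words). -/
def apply : TreeAut m → List (Fin m) → List (Fin m)
  | _, [] => []
  | a, x :: u => a.label [] x :: (a.sec [x]).apply u

/-- The inverse action of a tree automorphism on the vertices. -/
def invApply : TreeAut m → List (Fin m) → List (Fin m)
  | _, [] => []
  | a, x :: u => (a.label [])⁻¹ x :: (a.sec [(a.label [])⁻¹ x]).invApply u

instance : One (TreeAut m) := ⟨⟨fun _ => 1⟩⟩
instance : Mul (TreeAut m) := ⟨fun a b => ⟨fun u => a.label (b.apply u) * b.label u⟩⟩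
instance : Inv (TreeAut m) := ⟨fun a => ⟨fun u => (a.label (a.invApply u))⁻¹⟩⟩

@[simp] lemma one_label (u : List (Fin m)) : (1 : TreeAut m).label u = 1 := rfl

@[simp] lemma mul_label (a b : TreeAut m) (u : List (Fin m)) :
    (a * b).label u = a.label (b.apply u) * b.label u := rfl

@[simp] lemma inv_label (a : TreeAut m) (u : List (Fin m)) :
    a⁻¹.label u = (a.label (a.invApply u))⁻¹ := rfl

@[simp] lemma one_sec (v : List (Fin m)) : (1 : TreeAut m).sec v = 1 := rfl

@[simp] lemma apply_nil (a : TreeAut m) : a.apply [] = [] := rfl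

lemma apply_cons (a : TreeAut m) (x : Fin m) (u : List (Fin m)) :
    a.apply (x :: u) = a.label [] x :: (a.sec [x]).apply u := rfl

@[simp] lemma one_apply (u : List (Fin m)) : (1 : TreeAut m).apply u = u := by
  induction u with
  | nil => rfl
  | cons x u ih => simp [apply_cons, ih]

lemma apply_append (a : TreeAut m) (v u : List (Fin m)) :
    a.apply (v ++ u) = a.apply v ++ (a.sec v).apply u := by
  induction v generalizing a with
  | nil => simp
  | cons x v ih =>
      simp only [List.cons_append, apply_cons, ih, sec_sec, List.singleton_append,
        List.nil_append]

lemma mul_sec (a b : TreeAut m) (v : List (Fin m)) :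
    (a * b).sec v = a.sec (b.apply v) * b.sec v :=
  ext_label fun u => by simp [apply_append]

lemma mul_apply (a b : TreeAut m) (u : List (Fin m)) :
    (a * b).apply u = a.apply (b.apply u) := by
  induction u generalizing a b with
  | nil => rfl
  | cons x u ih =>
      rw [apply_cons, mul_sec, ih]
      simp [apply_cons, Equiv.Perm.mul_apply]

lemma invApply_apply (a : TreeAut m) (u : List (Fin m)) : a.invApply (a.apply u) = u := by
  induction u generalizing a with
  | nil => rfl
  | cons x u ih => simp [apply_cons, invApply, ih]

lemma apply_invApply (a : TreeAut m) (u : List (Fin m)) : a.apply (a.invApply u) = u := by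
  induction u generalizing a with
  | nil => rfl
  | cons x u ih => simp [invApply, apply_cons, ih]

instance : Group (TreeAut m) where
  mul_assoc a b c := ext_label fun u => by simp [mul_apply, mul_assoc]
  one_mul a := ext_label fun u => by simp
  mul_one a := ext_label fun u => by simp
  inv_mul_cancel a := ext_label fun u => by simp [invApply_apply]

lemma apply_injective (a : TreeAut m) : Function.Injective a.apply := by
  intro x y h
  have hx := invApply_apply a x
  rw [h, invApply_apply] at hx
  exact hx.symm

@[simp] lemma apply_length (a : TreeAut m) (u : List (Fin m)) :
    (a.apply u).length = u.length := by
  induction u generalizing a with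
  | nil => rfl
  | cons x u ih => simp [apply_cons, ih]

/-- `cons ρ f` is `ρ · ψ₁⁻¹(f 0, …, f (m-1))`: the automorphism with root label `ρ`
and first-layer sections `f x`. -/
def cons (ρ : Equiv.Perm (Fin m)) (f : Fin m → TreeAut m) : TreeAut m :=
  ⟨fun u =>
    match u with
    | [] => ρ
    | x :: v => (f x).label v⟩

end TreeAut

variable {m : ℕ}

/-- The `n`-th layer stabiliser `St_G(n)` of a group `G` of tree automorphisms. -/
def layerStab (G : Subgroup (TreeAut m)) (n : ℕ) : Subgroup (TreeAut m) where
  carrier := {g | g ∈ G ∧ ∀ u : List (Fin m), u.length = n → g.apply u = u}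
  one_mem' := ⟨G.one_mem, fun u _ => TreeAut.one_apply u⟩
  mul_mem' := by
    rintro a b ⟨haG, ha⟩ ⟨hbG, hb⟩
    refine ⟨G.mul_mem haG hbG, fun u hu => ?_⟩
    rw [TreeAut.mul_apply, hb u hu, ha u hu]
  inv_mem' := by
    rintro a ⟨haG, ha⟩
    refine ⟨G.inv_mem haG, fun u hu => ?_⟩
    apply TreeAut.apply_injective a
    rw [← TreeAut.mul_apply, mul_inv_cancel, TreeAut.one_apply, ha u hu]

/-- A group of tree automorphisms acts spherically transitively if it acts
transitively on every layer. -/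
def SphericallyTransitive (G : Subgroup (TreeAut m)) : Prop :=
  ∀ u v : List (Fin m), u.length = v.length → ∃ g ∈ G, g.apply u = v

/-- A group of tree automorphisms is self-similar if it is closed under sections. -/
def SelfSimilar (G : Subgroup (TreeAut m)) : Prop :=
  ∀ g ∈ G, ∀ v : List (Fin m), g.sec v ∈ G

/-- A spherically transitive group is fractal if `st_G(u)|_u = G` for all vertices `u`. -/
def Fractal (G : Subgroup (TreeAut m)) : Prop :=
  SphericallyTransitive G ∧
    ∀ u : List (Fin m),
      {h : TreeAut m | ∃ g ∈ G, g.apply u = u ∧ g.sec u = h} = (G : Set (TreeAut m))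

/-- A spherically transitive group is strongly fractal if `St_G(1)|_x = G` for all `x ∈ X`. -/
def StronglyFractal (G : Subgroup (TreeAut m)) : Prop :=
  SphericallyTransitive G ∧
    ∀ x : Fin m,
      {h : TreeAut m | ∃ g ∈ layerStab G 1, g.sec [x] = h} = (G : Set (TreeAut m))

/-- A spherically transitive group is very strongly fractal if
`St_G(n+1)|_x = St_G(n)` for all `n` and `x ∈ X`. -/
def VeryStronglyFractal (G : Subgroup (TreeAut m)) : Prop :=
  SphericallyTransitive G ∧
    ∀ (n : ℕ) (x : Fin m),
      {h : TreeAut m | ∃ g ∈ layerStab G (n + 1), g.sec [x] = h}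
        = (layerStab G n : Set (TreeAut m))

/-- A group of tree automorphisms is contracting if it has a finite nucleus. -/
def Contracting (G : Subgroup (TreeAut m)) : Prop :=
  ∃ N : Set (TreeAut m), N.Finite ∧ N ⊆ (G : Set (TreeAut m)) ∧
    ∀ g ∈ G, ∃ k : ℕ, ∀ v : List (Fin m), k < v.length → g.sec v ∈ N

/-- A tree automorphism is finite-state if it has finitely many distinct sections. -/
def FiniteState (f : TreeAut m) : Prop :=
  {h : TreeAut m | ∃ u : List (Fin m), f.sec u = h}.Finite

/-- A tree automorphism is bounded if the number of nontrivial sections at the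
`n`-th layer is bounded uniformly in `n`. -/
def BoundedAut (f : TreeAut m) : Prop :=
  ∃ C : ℕ, ∀ n : ℕ, {u : List (Fin m) | u.length = n ∧ f.sec u ≠ 1}.ncard ≤ C

/-- The `n`-th rigid layer stabiliser: the subgroup generated by the rigid vertex
stabilisers of the vertices of the `n`-th layer. -/
def rigidLayerStab (G : Subgroup (TreeAut m)) (n : ℕ) : Subgroup (TreeAut m) :=
  Subgroup.closure {g | g ∈ G ∧ ∃ v : List (Fin m), v.length = n ∧
    ∀ u : List (Fin m), ¬ v <+: u → g.apply u = u}

/-- A weakly branch group: spherically transitive with nontrivial rigid layer stabilisers. -/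
def WeaklyBranch (G : Subgroup (TreeAut m)) : Prop :=
  SphericallyTransitive G ∧ ∀ n : ℕ, rigidLayerStab G n ≠ ⊥

/-- `H` is weakly regular branch over `K ≤ H` if `ψ₁(St_K(1)) ⊇ K × ⋯ × K`. -/
def WeaklyRegularBranchOver (H K : Subgroup (TreeAut m)) : Prop :=
  K ≤ H ∧ ∀ f : Fin m → TreeAut m, (∀ x, f x ∈ K) → TreeAut.cons 1 f ∈ K

/-- The portrait of the `i`-th Basilica monomorphism `β^s_i` applied to `g`,
computed by recursion over vertices. -/
def betaLabel [NeZero m] (s : ℕ) : List (Fin m) → ℕ → TreeAut m → Equiv.Perm (Fin m)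
  | [], i, g => if i = 0 then g.label [] else 1
  | x :: u, i, g =>
      if i = 0 then betaLabel s u (s - 1) (g.sec [x])
      else if x = 0 then betaLabel s u (i - 1) g else 1

/-- The Basilica monomorphism `β^s_i : Aut(T) → Aut(T)`, satisfying
`β_i(g) = ψ₁⁻¹(β_{i-1}(g), 1, …, 1)` for `1 ≤ i ≤ s-1` and
`β_0(g) = g|^ε · ψ₁⁻¹(β_{s-1}(g|_0), …, β_{s-1}(g|_{m-1}))`. -/
def betaAut [NeZero m] (s i : ℕ) (g : TreeAut m) : TreeAut m := ⟨fun u => betaLabel s u i g⟩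

/-- The `s`-th Basilica group of `G`. -/
def basilica [NeZero m] (s : ℕ) (G : Subgroup (TreeAut m)) : Subgroup (TreeAut m) :=
  Subgroup.closure {b | ∃ g ∈ G, ∃ i < s, b = betaAut s i g}

/-- The subgroup `S_i = ⟨β_j(G) : j ≠ i⟩` of the `s`-th Basilica group. -/
def Ssub [NeZero m] (s i : ℕ) (G : Subgroup (TreeAut m)) : Subgroup (TreeAut m) :=
  Subgroup.closure {b | ∃ g ∈ G, ∃ j < s, j ≠ i ∧ b = betaAut s j g}

/-- The normal closure `N_i` of `S_i` in the `s`-th Basilica group of `G`. -/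
def Nsub [NeZero m] (s i : ℕ) (G : Subgroup (TreeAut m)) : Subgroup (TreeAut m) :=
  Subgroup.closure {x | ∃ b ∈ basilica s G, ∃ y ∈ Ssub s i G, x = b * y * b⁻¹}

/-- The `i`-th splitting kernel `K_i = β_i⁻¹(β_i(G) ∩ N_i)` of `G`, as a set. -/
def Kset [NeZero m] (s i : ℕ) (G : Subgroup (TreeAut m)) : Set (TreeAut m) :=
  {g | g ∈ G ∧ betaAut s i g ∈ Nsub s i G}

/-- The portrait of the monomorphism `π_i` (for the `d`-fold diagonal construction). -/
def piLabel (d : ℕ) : List (Fin m) → ℕ → TreeAut m → Equiv.Perm (Fin m)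
  | [], i, g => if i = 0 then g.label [] else 1
  | x :: u, i, g =>
      if i = 0 then piLabel d u (d - 1) (g.sec [x])
      else piLabel d u (i - 1) g

/-- The monomorphism `π_i : Aut(T) → Aut(T)`, satisfying
`π_0(g) = g|^ε · ψ₁⁻¹(π_{d-1}(g|_0), …, π_{d-1}(g|_{m-1}))` and
`π_i(g) = ψ₁⁻¹(π_{i-1}(g), …, π_{i-1}(g))` for `1 ≤ i ≤ d-1`. -/
def piAut (d i : ℕ) (g : TreeAut m) : TreeAut m := ⟨fun u => piLabel d u i g⟩

/-- The generator of the `m`-adic odometer: `a = σ · ψ₁⁻¹(a, 1, …, 1)` with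
`σ = (0 1 … m-1)`. -/
def odometer (m : ℕ) [NeZero m] : TreeAut m :=
  ⟨fun u => if ∀ x ∈ u, x = 0 then finRotate m else 1⟩

/-- The group `O_m^d = D_d(O_m) = ⟨π_i(a) : 0 ≤ i ≤ d-1⟩`. -/
def OdPow (m d : ℕ) [NeZero m] : Subgroup (TreeAut m) :=
  Subgroup.closure {x | ∃ i < d, x = piAut d i (odometer m)}

/-- The group `Γ` of all automorphisms all of whose labels are powers of the
cycle `σ = (0 1 … m-1)`. -/
def Gamma (m : ℕ) : Subgroup (TreeAut m) where
  carrier := {g | ∀ u : List (Fin m), g.label u ∈ Subgroup.zpowers (finRotate m)}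
  one_mem' := by
    intro u
    rw [TreeAut.one_label]
    exact one_mem _
  mul_mem' := by
    intro a b ha hb u
    rw [TreeAut.mul_label]
    exact mul_mem (ha _) (hb _)
  inv_mem' := by
    intro a ha u
    rw [TreeAut.inv_label]
    exact inv_mem (ha _)

/-- The Hausdorff dimension of `G ≤ Γ` relative to `Γ`. -/
noncomputable def hdim (m : ℕ) (G : Subgroup (TreeAut m)) : ℝ :=
  Filter.liminf (fun n : ℕ =>
    Real.logb m ((layerStab G n).relIndex G) /
      Real.logb m ((layerStab (Gamma m) n).relIndex (Gamma m))) Filter.atTop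

/-- The series of obstructions `o_G(n) = m·log_m|L_G(n-1)| - log_m|L_G(n)|` (for `n ≥ 1`),
where `L_G(n) = St_G(n)/St_G(n+1)`. -/
noncomputable def obstruction (m : ℕ) (G : Subgroup (TreeAut m)) (n : ℕ) : ℝ :=
  m * Real.logb m ((layerStab G n).relIndex (layerStab G (n - 1)))
    - Real.logb m ((layerStab G (n + 1)).relIndex (layerStab G n))

/-- The permutation group induced by `G` on the first layer acts regularly on `X`. -/
def RegularRootAction (G : Subgroup (TreeAut m)) : Prop :=
  (∀ x y : Fin m, ∃ g ∈ G, g.label [] x = y) ∧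
    ∀ g ∈ G, ∀ x : Fin m, g.label [] x = x → g.label [] = 1



section TorsionFreeProof

variable {m : ℕ}

/-- The root label, as a group homomorphism. -/
def rootHom : TreeAut m →* Equiv.Perm (Fin m) where
  toFun a := a.label []
  map_one' := rfl
  map_mul' _ _ := rfl

@[simp] lemma rootHom_apply (a : TreeAut m) : rootHom a = a.label [] := rfl

variable [NeZero m]

lemma betaAut_label (s i : ℕ) (g : TreeAut m) (u : List (Fin m)) :
    (betaAut s i g).label u = betaLabel s u i g := rfl

lemma betaAut_sec (s i : ℕ) (g : TreeAut m) (x : Fin m) :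
    (betaAut s i g).sec [x] =
      if i = 0 then betaAut s (s - 1) (g.sec [x])
      else if x = 0 then betaAut s (i - 1) g else 1 := by
  apply TreeAut.ext_label
  intro u
  by_cases hi : i = 0
  · simp only [hi, if_pos, TreeAut.sec_label, List.singleton_append]
    rfl
  · by_cases hx : x = 0
    · simp only [hi, hx, if_neg, if_pos, TreeAut.sec_label, List.singleton_append, ite_false]
      show betaLabel s ((0 : Fin m) :: u) i g = _
      rw [betaLabel]
      simp only [hi, ite_false, ite_true]
      rfl
    · simp only [hi, hx, TreeAut.sec_label, List.singleton_append, ite_false]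
      show betaLabel s (x :: u) i g = (1 : TreeAut m).label u
      rw [betaLabel]
      simp [hi, hx]

lemma betaAut_root_label (s i : ℕ) (g : TreeAut m) :
    (betaAut s i g).label [] = if i = 0 then g.label [] else 1 := rfl

lemma betaLabel_one (s : ℕ) (u : List (Fin m)) (i : ℕ) :
    betaLabel s u i (1 : TreeAut m) = 1 := by
  induction u generalizing i with
  | nil => rw [betaLabel]; split <;> rfl
  | cons x v ih =>
      rw [betaLabel, TreeAut.one_sec]
      split
      · exact ih _
      · split
        · exact ih _
        · rfl

lemma betaAut_one (s i : ℕ) : betaAut s i (1 : TreeAut m) = 1 :=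
  TreeAut.ext_label fun u => betaLabel_one s u i

lemma betaAut_apply_cons (s i : ℕ) (g : TreeAut m) (x : Fin m) (v : List (Fin m)) :
    (betaAut s i g).apply (x :: v) =
      (if i = 0 then g.label [] x else x) ::
        ((if i = 0 then betaAut s (s - 1) (g.sec [x])
          else if x = 0 then betaAut s (i - 1) g else 1).apply v) := by
  rw [TreeAut.apply_cons, betaAut_sec, betaAut_root_label]
  by_cases hi : i = 0 <;> simp [hi]

lemma betaLabel_mul (s : ℕ) :
    ∀ (u : List (Fin m)) (i : ℕ) (g h : TreeAut m),
      betaLabel s u i (g * h) =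
        betaLabel s ((betaAut s i h).apply u) i g * betaLabel s u i h := by
  intro u
  induction u with
  | nil =>
      intro i g h
      rw [TreeAut.apply_nil, betaLabel, betaLabel, betaLabel]
      split
      · rw [TreeAut.mul_label, TreeAut.apply_nil]
      · rw [mul_one]
  | cons x v ih =>
      intro i g h
      rw [betaAut_apply_cons]
      by_cases hi : i = 0
      · subst hi
        simp only [if_pos]
        show betaLabel s v (s - 1) ((g * h).sec [x]) =
          betaLabel s (h.label [] x :: (betaAut s (s - 1) (h.sec [x])).apply v) 0 g *
            betaLabel s v (s - 1) (h.sec [x])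
        have hsec : (g * h).sec [x] = g.sec [h.label [] x] * h.sec [x] := by
          rw [TreeAut.mul_sec, TreeAut.apply_cons, TreeAut.apply_nil]
        rw [hsec, ih]
        rfl
      · by_cases hx : x = 0
        · subst hx
          simp only [hi, ite_false, if_pos]
          show betaLabel s (0 :: v) i (g * h) =
            betaLabel s ((0 : Fin m) :: (betaAut s (i - 1) h).apply v) i g *
              betaLabel s (0 :: v) i h
          rw [betaLabel, betaLabel, betaLabel]
          simp only [hi, ite_false, if_pos, ite_true]
          exact ih (i - 1) g h
        · simp only [hi, hx, ite_false, TreeAut.one_apply]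
          rw [betaLabel, betaLabel, betaLabel]
          simp [hi, hx]

lemma betaAut_mul (s i : ℕ) (g h : TreeAut m) :
    betaAut s i (g * h) = betaAut s i g * betaAut s i h :=
  TreeAut.ext_label fun u => betaLabel_mul s u i g h

lemma betaAut_inv (s i : ℕ) (g : TreeAut m) :
    betaAut s i g⁻¹ = (betaAut s i g)⁻¹ := by
  have h : betaAut s i g * betaAut s i g⁻¹ = 1 := by
    rw [← betaAut_mul, mul_inv_cancel, betaAut_one]
  exact (inv_eq_of_mul_eq_one_right h).symm

lemma betaAut_pow (s i : ℕ) (g : TreeAut m) (n : ℕ) :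
    betaAut s i (g ^ n) = (betaAut s i g) ^ n := by
  induction n with
  | zero => rw [pow_zero, pow_zero, betaAut_one]
  | succ k ihk => rw [pow_succ, pow_succ, betaAut_mul, ihk]

variable (s : ℕ) (G : Subgroup (TreeAut m))

lemma betaAut_mem_basilica {g : TreeAut m} (hg : g ∈ G) {i : ℕ} (hi : i < s) :
    betaAut s i g ∈ basilica s G :=
  Subgroup.subset_closure ⟨g, hg, i, hi, rfl⟩

lemma Ssub_le_Nsub {y : TreeAut m} (hy : y ∈ Ssub s 0 G) : y ∈ Nsub s 0 G :=
  Subgroup.subset_closure ⟨1, (basilica s G).one_mem, y, hy, by group⟩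

lemma Ssub_le_basilica : Ssub s 0 G ≤ basilica s G := by
  rw [Ssub, Subgroup.closure_le]
  rintro b ⟨g, hg, j, hj, _, rfl⟩
  exact betaAut_mem_basilica s G hg hj

lemma Nsub_le_basilica : Nsub s 0 G ≤ basilica s G := by
  rw [Nsub, Subgroup.closure_le]
  rintro x ⟨b, hb, y, hy, rfl⟩
  exact mul_mem (mul_mem hb (Ssub_le_basilica s G hy)) (inv_mem hb)

lemma Nsub_conj {b n : TreeAut m} (hb : b ∈ basilica s G) (hn : n ∈ Nsub s 0 G) :
    b * n * b⁻¹ ∈ Nsub s 0 G := by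
  induction hn using Subgroup.closure_induction with
  | mem x hx =>
      obtain ⟨c, hc, y, hy, rfl⟩ := hx
      have : b * (c * y * c⁻¹) * b⁻¹ = (b * c) * y * (b * c)⁻¹ := by group
      rw [this]
      exact Subgroup.subset_closure ⟨b * c, mul_mem hb hc, y, hy, rfl⟩
  | one => simpa using (Nsub s 0 G).one_mem
  | mul x y _ _ px py =>
      have : b * (x * y) * b⁻¹ = (b * x * b⁻¹) * (b * y * b⁻¹) := by group
      rw [this]
      exact mul_mem px py
  | inv x _ px =>
      have : b * x⁻¹ * b⁻¹ = (b * x * b⁻¹)⁻¹ := by group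
      rw [this]
      exact inv_mem px

lemma Ssub_root_label {y : TreeAut m} (hy : y ∈ Ssub s 0 G) : y.label [] = 1 := by
  have : Ssub s 0 G ≤ rootHom.ker := by
    rw [Ssub, Subgroup.closure_le]
    rintro b ⟨g, hg, j, hj, hj0, rfl⟩
    simp only [SetLike.mem_coe, MonoidHom.mem_ker, rootHom_apply]
    rw [betaAut_root_label, if_neg hj0]
  exact this hy

lemma Nsub_root_label {y : TreeAut m} (hy : y ∈ Nsub s 0 G) : y.label [] = 1 := by
  have : Nsub s 0 G ≤ rootHom.ker := by
    rw [Nsub, Subgroup.closure_le]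
    rintro x ⟨b, hb, y, hy, rfl⟩
    simp only [SetLike.mem_coe, MonoidHom.mem_ker, map_mul, map_inv]
    rw [rootHom_apply y, Ssub_root_label s G hy]
    group
  simpa using this hy

lemma sec_mem_basilica (hs : 1 ≤ s) (hss : SelfSimilar G)
    {b : TreeAut m} (hb : b ∈ basilica s G) (x : Fin m) :
    b.sec [x] ∈ basilica s G := by
  revert x
  induction hb using Subgroup.closure_induction with
  | mem c hc =>
      obtain ⟨g, hg, i, hi, rfl⟩ := hc
      intro x
      rw [betaAut_sec]
      by_cases hi0 : i = 0
      · rw [if_pos hi0]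
        exact betaAut_mem_basilica s G (hss g hg [x]) (Nat.sub_lt hs Nat.one_pos)
      · rw [if_neg hi0]
        by_cases hx : x = 0
        · rw [if_pos hx]
          exact betaAut_mem_basilica s G hg (lt_of_le_of_lt (Nat.sub_le i 1) hi)
        · rw [if_neg hx]
          exact (basilica s G).one_mem
  | one => intro x; rw [TreeAut.one_sec]; exact (basilica s G).one_mem
  | mul a c _ _ pa pc =>
      intro x
      rw [TreeAut.mul_sec, TreeAut.apply_cons, TreeAut.apply_nil]
      exact mul_mem (pa _) (pc _)
  | inv a _ pa =>
      intro x
      have h1 : (a * a⁻¹).sec [x] = a.sec (a⁻¹.apply [x]) * a⁻¹.sec [x] :=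
        TreeAut.mul_sec a a⁻¹ [x]
      rw [mul_inv_cancel, TreeAut.one_sec, TreeAut.apply_cons, TreeAut.apply_nil] at h1
      have h2 : a⁻¹.sec [x] = (a.sec [a⁻¹.label [] x])⁻¹ :=
        (inv_eq_of_mul_eq_one_right h1.symm)
      rw [h2]
      exact inv_mem (pa _)

lemma apply_single_of_root_one {b : TreeAut m} (hb : b.label [] = 1) (x : Fin m) :
    b.apply [x] = [x] := by
  rw [TreeAut.apply_cons, TreeAut.apply_nil, hb]
  rfl

lemma pow_sec_of_root_one {b : TreeAut m} (hb : b.label [] = 1) (x : Fin m) (n : ℕ) :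
    (b ^ n).sec [x] = (b.sec [x]) ^ n := by
  induction n with
  | zero => rw [pow_zero, pow_zero, TreeAut.one_sec]
  | succ k ihk =>
      rw [pow_succ, pow_succ, TreeAut.mul_sec, apply_single_of_root_one hb, ihk]

lemma basilica_coset (hs : 1 ≤ s) {b : TreeAut m} (hb : b ∈ basilica s G) :
    ∃ g ∈ G, (betaAut s 0 g)⁻¹ * b ∈ Nsub s 0 G := by
  induction hb using Subgroup.closure_induction with
  | mem c hc =>
      obtain ⟨g, hg, i, hi, rfl⟩ := hc
      by_cases hi0 : i = 0
      · subst hi0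
        exact ⟨g, hg, by rw [inv_mul_cancel]; exact (Nsub s 0 G).one_mem⟩
      · refine ⟨1, G.one_mem, ?_⟩
        rw [betaAut_one, inv_one, one_mul]
        exact Ssub_le_Nsub s G (Subgroup.subset_closure ⟨g, hg, i, hi, hi0, rfl⟩)
  | one => exact ⟨1, G.one_mem, by rw [betaAut_one, inv_one, one_mul]; exact (Nsub s 0 G).one_mem⟩
  | mul b c _ _ pb pc =>
      obtain ⟨g, hg, hbg⟩ := pb
      obtain ⟨h, hh, hch⟩ := pc
      refine ⟨g * h, mul_mem hg hh, ?_⟩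
      have heq : (betaAut s 0 (g * h))⁻¹ * (b * c) =
          ((betaAut s 0 h)⁻¹ * ((betaAut s 0 g)⁻¹ * b) * ((betaAut s 0 h)⁻¹)⁻¹) *
            ((betaAut s 0 h)⁻¹ * c) := by
        rw [betaAut_mul]; group
      rw [heq]
      exact mul_mem
        (Nsub_conj s G (inv_mem (betaAut_mem_basilica s G hh hs)) hbg) hch
  | inv b _ pb =>
      obtain ⟨g, hg, hbg⟩ := pb
      refine ⟨g⁻¹, inv_mem hg, ?_⟩
      have heq : (betaAut s 0 g⁻¹)⁻¹ * b⁻¹ =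
          betaAut s 0 g * ((betaAut s 0 g)⁻¹ * b)⁻¹ * (betaAut s 0 g)⁻¹ := by
        rw [betaAut_inv]; group
      rw [heq]
      exact Nsub_conj s G (betaAut_mem_basilica s G hg hs) (inv_mem hbg)

lemma coset_pow (hs : 1 ≤ s) {b g : TreeAut m} (hg : g ∈ G)
    (hbg : (betaAut s 0 g)⁻¹ * b ∈ Nsub s 0 G) (k : ℕ) :
    (betaAut s 0 (g ^ k))⁻¹ * b ^ k ∈ Nsub s 0 G := by
  induction k with
  | zero =>
      rw [pow_zero, pow_zero, betaAut_one, inv_one, one_mul]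
      exact (Nsub s 0 G).one_mem
  | succ k ihk =>
      have heq : (betaAut s 0 (g ^ (k + 1)))⁻¹ * b ^ (k + 1) =
          ((betaAut s 0 g)⁻¹ * ((betaAut s 0 (g ^ k))⁻¹ * b ^ k) * ((betaAut s 0 g)⁻¹)⁻¹) *
            ((betaAut s 0 g)⁻¹ * b) := by
        rw [pow_succ g, betaAut_mul, pow_succ b]; group
      rw [heq]
      exact mul_mem
        (Nsub_conj s G (inv_mem (betaAut_mem_basilica s G hg hs)) ihk) hbg

lemma torsion_mem_Nsub (hs : 1 ≤ s)
    (hquot : ∀ g ∈ G, ∀ n : ℕ, 0 < n → g ^ n ∈ Kset s 0 G → g ∈ Kset s 0 G)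
    {b : TreeAut m} (hb : b ∈ basilica s G) {n : ℕ} (hn : 0 < n) (hbn : b ^ n = 1) :
    b ∈ Nsub s 0 G := by
  obtain ⟨g, hg, hbg⟩ := basilica_coset s G hs hb
  have hpow : (betaAut s 0 (g ^ n))⁻¹ * b ^ n ∈ Nsub s 0 G := coset_pow s G hs hg hbg n
  rw [hbn, mul_one] at hpow
  have hgn : g ^ n ∈ Kset s 0 G := ⟨pow_mem hg n, by simpa using inv_mem hpow⟩
  have hgK : g ∈ Kset s 0 G := hquot g hg n hn hgn
  have hb0 : betaAut s 0 g ∈ Nsub s 0 G := hgK.2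
  have : betaAut s 0 g * ((betaAut s 0 g)⁻¹ * b) ∈ Nsub s 0 G := mul_mem hb0 hbg
  simpa using this

end TorsionFreeProof

/-- Let `s ≥ 1` and let `G ≤ Aut(T)` be a torsion-free self-similar
group such that the quotient `G/K_0` by the zeroth splitting kernel is torsion-free
(i.e. `g^n ∈ K_0` for some `n ≥ 1` implies `g ∈ K_0`). Then `Bas_s(G)` is torsion-free. -/
theorem basilica_torsionFree {m : ℕ} [NeZero m] (hm : 2 ≤ m)
    (s : ℕ) (hs : 1 ≤ s) (G : Subgroup (TreeAut m)) (hss : SelfSimilar G)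
    (htf : ∀ g ∈ G, ∀ n : ℕ, 0 < n → g ^ n = 1 → g = 1)
    (hquot : ∀ g ∈ G, ∀ n : ℕ, 0 < n → g ^ n ∈ Kset s 0 G → g ∈ Kset s 0 G) :
    ∀ b ∈ basilica s G, ∀ n : ℕ, 0 < n → b ^ n = 1 → b = 1 := by
  intro b hb n hn hbn
  have key : ∀ u : List (Fin m), ∀ c, c ∈ basilica s G → c ^ n = 1 → c.label u = 1 := by
    intro u
    induction u with
    | nil =>
        intro c hc hcn
        exact Nsub_root_label s G (torsion_mem_Nsub s G hs hquot hc hn hcn)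
    | cons x v ih =>
        intro c hc hcn
        have hroot : c.label [] = 1 :=
          Nsub_root_label s G (torsion_mem_Nsub s G hs hquot hc hn hcn)
        have hsec : c.sec [x] ∈ basilica s G := sec_mem_basilica s G hs hss hc x
        have hpow : (c.sec [x]) ^ n = 1 := by
          rw [← pow_sec_of_root_one hroot, hcn, TreeAut.one_sec]
        have := ih (c.sec [x]) hsec hpow
        rwa [TreeAut.sec_label, List.singleton_append] at this
  exact TreeAut.ext_label fun u => (key u b hb hbn).trans rfl

end Basilica
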